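/- Let Q ≥ 1 and N ≥ 1, let Z be a finite emission alphabet, let y : Fin N → Z be a fixed sequence of emissions, let a : Fin Q → ℂ be an initial amplitude vector, and let c : Fin Q → Fin Q → Z → ℂ be transition amplitudes (in the paper, c i j z = exp(I·f(P_{i,j}(z))) for admissible transitions of the hidden Markov model and 0 otherwise). Suppose V : Z → Matrix (Fin Q × Fin Q) (Fin Q × Fin Q) ℂ is a family of matrices such that for every z ∈ Z and every i ∈ Fin Q, V z maps the standard basis vector e_{(i,0)} to ∑_{j} (c i j z) · e_{(i,j)}. For 1 ≤ n ≤ N let M_n be the matrix on ℂ^{(Fin (N+1) → Fin Q)} that acts as V (y n) on the coordinates (n−1, n) and as the identity on all other coordinates, i.e. M_n[π, σ] = (V (y n))[(π(n−1), π(n)), (σ(n−1), σ(n))] · ∏_{m ∉ {n−1, n}} δ_{π(m), σ(m)}. Then the product M_N ⋯ M_2 M_1 applied to the vector π ↦ a(π(0)) · ∏_{m=1}^{N} δ_{π(m), 0} (the state |ψ₀⟩|0⟩⋯|0⟩) equals the vector π ↦ a(π(0)) · ∏_{n=1}^{N} c (π(n−1)) (π(n)) (y n); that is, the resulting state is the superposition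 over all paths π through the lattice, each carrying the product of its transition amplitudes. -/

import Mathlib

/-- The lattice-building step `G_φ` of the quantum Viterbi algorithm: chaining the
classically controlled gates `V (y n)` along the lattice, starting from the state
`|ψ₀⟩|0⟩⋯|0⟩`, produces the superposition over all paths `π` through the hidden Markov
model lattice, each path carrying the product of its transition amplitudes. -/
theorem qva_lattice_building
    (Q N : ℕ) [NeZero Q] (hN : 1 ≤ N)
    (Z : Type*) [Fintype Z]
    (y : Fin N → Z)
    (a : Fin Q → ℂ)
    (c : Fin Q → Fin Q → Z → ℂ)
    (V : Z → Matrix (Fin Q × Fin Q) (Fin Q × Fin Q) ℂ)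
    (hV : ∀ (z : Z) (i : Fin Q),
      (V z).mulVec (Pi.single (i, (0 : Fin Q)) 1) =
        fun p => if p.1 = i then c i p.2 z else 0)
    (M : Fin N → Matrix (Fin (N + 1) → Fin Q) (Fin (N + 1) → Fin Q) ℂ)
    (hM : ∀ (n : Fin N) (π σ : Fin (N + 1) → Fin Q),
      M n π σ =
        V (y n) (π n.castSucc, π n.succ) (σ n.castSucc, σ n.succ) *
          ∏ m ∈ Finset.univ.filter (fun m => m ≠ n.castSucc ∧ m ≠ n.succ),
            (if π m = σ m then (1 : ℂ) else 0)) :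
    ((List.ofFn M).reverse.prod).mulVec
        (fun π => a (π 0) * ∏ n : Fin N, (if π n.succ = 0 then (1 : ℂ) else 0)) =
      fun π => a (π 0) * ∏ n : Fin N, c (π n.castSucc) (π n.succ) (y n) := by
  classical
  -- entries of the V-matrices on the relevant columns
  have hV' : ∀ (z : Z) (i : Fin Q) (p : Fin Q × Fin Q),
      V z p (i, (0 : Fin Q)) = if p.1 = i then c i p.2 z else 0 := by
    intro z i p
    have := congrFun (hV z i) p
    simpa [Matrix.mulVec_single] using this
  -- the intermediate states
  set psi : ℕ → (Fin (N + 1) → Fin Q) → ℂ := fun k π =>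
    a (π 0) * ∏ m : Fin N,
      (if (m : ℕ) < k then c (π m.castSucc) (π m.succ) (y m)
       else if π m.succ = 0 then (1 : ℂ) else 0) with hpsi
  -- key step: applying one gate
  have key : ∀ n : Fin N, (M n).mulVec (psi n) = psi (n + 1) := by
    intro n
    funext π
    have hcs_ne : n.castSucc ≠ n.succ := (Fin.castSucc_lt_succ : n.castSucc < n.succ).ne
    have hsucc_ne_zero : (n.succ : Fin (N + 1)) ≠ 0 := Fin.succ_ne_zero n
    set σ₀ : Fin (N + 1) → Fin Q := Function.update π n.succ 0 with hσ₀
    have hσ₀s : σ₀ n.succ = 0 := by rw [hσ₀]; exact Function.update_self _ _ _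
    have hσ₀ne : ∀ m : Fin (N + 1), m ≠ n.succ → σ₀ m = π m := by
      intro m hm; rw [hσ₀]; exact Function.update_of_ne hm _ _
    show ∑ σ, M n π σ * psi n σ = psi (n + 1) π
    rw [Finset.sum_eq_single σ₀]
    · -- the surviving term
      rw [hM]
      rw [hσ₀ne n.castSucc hcs_ne, hσ₀s, hV']
      simp only [if_pos rfl]
      have hprod1 : (∏ m ∈ Finset.univ.filter
          (fun m => m ≠ n.castSucc ∧ m ≠ n.succ),
          (if π m = σ₀ m then (1 : ℂ) else 0)) = 1 := by
        apply Finset.prod_eq_one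
        intro m hm
        rw [Finset.mem_filter] at hm
        rw [hσ₀ne m hm.2.2, if_pos rfl]
      rw [hprod1, mul_one]
      -- compute psi n σ₀
      have hσ₀0 : σ₀ 0 = π 0 := hσ₀ne 0 (Ne.symm hsucc_ne_zero)
      rw [hpsi]
      simp only
      rw [hσ₀0]
      rw [← Finset.mul_prod_erase Finset.univ
        (fun m : Fin N => if (m : ℕ) < (n : ℕ) + 1 then c (π m.castSucc) (π m.succ) (y m)
          else if π m.succ = 0 then (1 : ℂ) else 0) (Finset.mem_univ n)]
      rw [← Finset.mul_prod_erase Finset.univ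
        (fun m : Fin N => if (m : ℕ) < (n : ℕ) then c (σ₀ m.castSucc) (σ₀ m.succ) (y m)
          else if σ₀ m.succ = 0 then (1 : ℂ) else 0) (Finset.mem_univ n)]
      simp only [if_neg (lt_irrefl (n : ℕ)), if_pos (Nat.lt_succ_self (n : ℕ)),
        hσ₀s, if_pos rfl]
      have hrest : (∏ m ∈ Finset.univ.erase n,
          (if (m : ℕ) < (n : ℕ) then c (σ₀ m.castSucc) (σ₀ m.succ) (y m)
           else if σ₀ m.succ = 0 then (1 : ℂ) else 0)) =
          ∏ m ∈ Finset.univ.erase n,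
          (if (m : ℕ) < (n : ℕ) + 1 then c (π m.castSucc) (π m.succ) (y m)
           else if π m.succ = 0 then (1 : ℂ) else 0) := by
        apply Finset.prod_congr rfl
        intro m hm
        have hmne : m ≠ n := (Finset.mem_erase.1 hm).1
        have hms : (m.succ : Fin (N + 1)) ≠ n.succ := by
          simpa [Fin.succ_inj] using hmne
        have hmsu : σ₀ m.succ = π m.succ := hσ₀ne _ hms
        by_cases hlt : (m : ℕ) < (n : ℕ)
        · have hmcs : (m.castSucc : Fin (N + 1)) ≠ n.succ := by
            intro h
            have : (m : ℕ) = (n : ℕ) + 1 := by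
              simpa using congrArg Fin.val h
            omega
          rw [if_pos hlt, if_pos (by omega : (m : ℕ) < (n : ℕ) + 1),
            hσ₀ne _ hmcs, hmsu]
        · have hne : (m : ℕ) ≠ (n : ℕ) := fun h => hmne (Fin.val_injective h)
          rw [if_neg hlt, if_neg (by omega : ¬ (m : ℕ) < (n : ℕ) + 1), hmsu]
      rw [hrest]
      simp only [if_true]
      ring
    · -- all other terms vanish
      intro σ _ hσne
      by_cases h0 : σ n.succ = 0
      · rcases Function.ne_iff.1 hσne with ⟨m, hm⟩
        have hms : m ≠ n.succ := by
          intro h; subst h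
          rw [hσ₀s] at hm
          exact hm h0
        have hmπ : σ m ≠ π m := by
          rwa [hσ₀ne m hms] at hm
        by_cases hmcs : m = n.castSucc
        · subst hmcs
          rw [hM, h0, hV', if_neg (fun h => hmπ h.symm), zero_mul, zero_mul]
        · rw [hM]
          have : (∏ m' ∈ Finset.univ.filter
              (fun m' => m' ≠ n.castSucc ∧ m' ≠ n.succ),
              (if π m' = σ m' then (1 : ℂ) else 0)) = 0 := by
            apply Finset.prod_eq_zero (i := m)
            · simp [hmcs, hms]
            · rw [if_neg (fun h => hmπ h.symm)]
          rw [this, mul_zero, zero_mul]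
      · rw [hpsi]
        simp only
        have : (∏ m : Fin N,
            (if (m : ℕ) < (n : ℕ) then c (σ m.castSucc) (σ m.succ) (y m)
             else if σ m.succ = 0 then (1 : ℂ) else 0)) = 0 := by
          apply Finset.prod_eq_zero (Finset.mem_univ n)
          rw [if_neg (lt_irrefl _), if_neg h0]
        rw [this, mul_zero, mul_zero]
    · intro h
      exact absurd (Finset.mem_univ σ₀) h
  -- chain the gates by induction on the prefix length
  have main : ∀ k, k ≤ N →
      (((List.ofFn M).take k).reverse.prod).mulVec (psi 0) = psi k := by
    intro k
    induction k with
    | zero => intro _; simp [Matrix.one_mulVec]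
    | succ k ih =>
      intro hk
      have hk' : k < N := hk
      have htake : (List.ofFn M).take (k + 1) =
          (List.ofFn M).take k ++ [M ⟨k, hk'⟩] := by
        rw [List.take_succ]
        congr 1
        rw [List.getElem?_eq_getElem (by simpa using hk')]
        simp [List.getElem_ofFn]
      rw [htake, List.reverse_append, List.reverse_singleton, List.singleton_append,
        List.prod_cons, ← Matrix.mulVec_mulVec, ih (le_of_lt hk'), key ⟨k, hk'⟩]
  have hfinal := main N le_rfl
  rw [List.take_of_length_le (by simp)] at hfinal
  have hstart : (fun π : Fin (N + 1) → Fin Q =>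
      a (π 0) * ∏ n : Fin N, (if π n.succ = 0 then (1 : ℂ) else 0)) = psi 0 := by
    funext π; simp [hpsi]
  rw [hstart, hfinal, hpsi]
  funext π
  simp [Fin.is_lt]
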